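/- For symmetric positive definite real n×n matrices A and B, if the matrix A^{1/2}·B·A^{-1/2}·(A^{1/2}(A+B)A^{1/2})^{1/2} is symmetric, then B·(A+B) is symmetric, hence A·B = B·A. -/

import Mathlib

open Matrix

-- Key lemma: P SPD, A,B PosDef, P commutes with B, P*A*P = A+B  ⟹  P*A = A*P
lemma key_comm {n : ℕ} (P A B : Matrix (Fin n) (Fin n) ℝ)
    (hP : P.PosDef) (hA : A.PosDef) (hB : B.PosDef)
    (hPB : P * B = B * P) (hPAP : P * A * P = A + B) :
    P * A = A * P := by
  classical
  set C : Matrix (Fin n) (Fin n) ℝ := P * A - A * P with hCdef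
  have hPsymm : Pᵀ = P := by
    have h2 : Pᴴ = P := hP.1
    rwa [Matrix.conjTranspose_eq_transpose_of_trivial] at h2
  -- P * C * P = C
  have hC : P * C * P = C := by
    have e : P * C * P = P * (P * A * P) - (P * A * P) * P := by
      simp only [hCdef, Matrix.mul_sub, Matrix.sub_mul, Matrix.mul_assoc]
    rw [e, hPAP, Matrix.mul_add, Matrix.add_mul, hPB, hCdef]
    abel
  -- eigen data of P
  have hPh := hP.1
  set μ : Fin n → ℝ := hPh.eigenvalues with hμ
  -- each eigenvalue exceeds 1
  have hμ1 : ∀ i, 1 < μ i := by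
    intro i
    set v : Fin n → ℝ := ⇑(hPh.eigenvectorBasis i) with hv
    have hv
      : P *ᵥ v = μ i • v := hPh.mulVec_eigenvectorBasis i
    have hvne : v ≠ 0 := by
      intro h0
      exact hPh.eigenvectorBasis.orthonormal.ne_zero i (by ext j; exact congrFun h0 j)
    have ha : 0 < v ⬝ᵥ A *ᵥ v := by simpa using hA.dotProduct_mulVec_pos hvne
    have hb : 0 < v ⬝ᵥ B *ᵥ v := by simpa using hB.dotProduct_mulVec_pos hvne
    have hdot : ∀ w : Fin n → ℝ, v ⬝ᵥ P *ᵥ w = μ i * (v ⬝ᵥ w) := by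
      intro w
      rw [Matrix.dotProduct_mulVec, ← hPsymm, Matrix.vecMul_transpose, hv]
      simp [smul_dotProduct]
    have hkey : v ⬝ᵥ (P * A * P) *ᵥ v = μ i * μ i * (v ⬝ᵥ A *ᵥ v) := by
      rw [← Matrix.mulVec_mulVec, ← Matrix.mulVec_mulVec, hdot, hv, Matrix.mulVec_smul,
        dotProduct_smul]
      simp [smul_eq_mul]
      ring
    have hkey2 : v ⬝ᵥ (P * A * P) *ᵥ v = v ⬝ᵥ A *ᵥ v + v ⬝ᵥ B *ᵥ v := by
      rw [hPAP, Matrix.add_mulVec, dotProduct_add]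
    have hμpos : 0 < μ i := hP.eigenvalues_pos i
    have hsq : 1 < μ i * μ i := by nlinarith [hkey, hkey2, ha, hb]
    nlinarith [hsq, hμpos]
  -- conjugate C by the eigenvector unitary
  set U : Matrix (Fin n) (Fin n) ℝ := (hPh.eigenvectorUnitary : Matrix (Fin n) (Fin n) ℝ) with hU
  have hU1 : U * star U = 1 := (Matrix.mem_unitaryGroup_iff).mp (hPh.eigenvectorUnitary).2
  have hU2 : star U * U = 1 := (Matrix.mem_unitaryGroup_iff').mp (hPh.eigenvectorUnitary).2
  set D : Matrix (Fin n) (Fin n) ℝ := Matrix.diagonal (RCLike.ofReal ∘ μ) with hD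
  have hspec : P = U * D * star U := hPh.spectral_theorem
  have hPU : P * U = U * D := by
    rw [hspec, Matrix.mul_assoc, Matrix.mul_assoc, hU2, Matrix.mul_one]
  have hUP : star U * P = D * star U := by
    rw [hspec, ← Matrix.mul_assoc, ← Matrix.mul_assoc, hU2, Matrix.one_mul]
  set X : Matrix (Fin n) (Fin n) ℝ := star U * C * U with hX
  have hXD : D * X * D = X := by
    calc D * X * D = (D * star U) * C * (U * D) := by
          simp only [hX, Matrix.mul_assoc]
      _ = (star U * P) * C * (P * U) := by rw [hPU, hUP]
      _ = star U * (P * C * P) * U := by simp only [Matrix.mul_assoc]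
      _ = X := by rw [hC]
  have hX0 : X = 0 := by
    ext i j
    have hXDij : (D * X * D) i j = X i j := by rw [hXD]
    have hij : (D * X * D) i j = μ i * X i j * μ j := by
      rw [hD, Matrix.mul_diagonal, Matrix.diagonal_mul]
      simp [Function.comp, RCLike.ofReal_real_eq_id]
    have h1i := hμ1 i
    have h1j := hμ1 j
    have heq : μ i * X i j * μ j = X i j := by rw [← hij]; exact hXDij
    have hz : X i j * (μ i * μ j - 1) = 0 := by linear_combination heq
    rcases mul_eq_zero.mp hz with h' | h'
    · simpa using h'
    · nlinarith
  have hC0 : C = 0 := by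
    have : U * X * star U = C := by
      calc U * X * star U = (U * star U) * C * (U * star U) := by
            simp only [hX, Matrix.mul_assoc]
        _ = C := by rw [hU1, Matrix.one_mul, Matrix.mul_one]
    rw [hX0] at this
    simpa using this.symm
  have := sub_eq_zero.mp hC0
  exact this

/-- For symmetric positive definite A, B, if A^{1/2}·B·A^{-1/2}·(A^{1/2}(A+B)A^{1/2})^{1/2}
is symmetric then B·(A+B) is symmetric, hence A·B = B·A. -/
theorem stmt_2 {n : ℕ} (A B S R : Matrix (Fin n) (Fin n) ℝ)
    (hA : A.PosDef) (hAs : A.IsSymm) (hB : B.PosDef) (hBs : B.IsSymm)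
    (hS : S.PosDef) (hSs : S.IsSymm) (hSsq : S * S = A)
    (hR : R.PosDef) (hRs : R.IsSymm) (hRsq : R * R = S * (A + B) * S)
    (h : (S * B * S⁻¹ * R).IsSymm) :
    (B * (A + B)).IsSymm ∧ A * B = B * A := by
  classical
  have hdS : IsUnit S.det := hS.det_pos.ne'.isUnit
  have hS1 : S * S⁻¹ = 1 := Matrix.mul_nonsing_inv S hdS
  have hS2 : S⁻¹ * S = 1 := Matrix.nonsing_inv_mul S hdS
  have hSiT : (S⁻¹)ᵀ = S⁻¹ := by rw [Matrix.transpose_nonsing_inv, hSs.eq]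
  set P : Matrix (Fin n) (Fin n) ℝ := S⁻¹ * R * S⁻¹ with hPdef
  have hPT : Pᵀ = P := by
    rw [hPdef, Matrix.transpose_mul, Matrix.transpose_mul, hSiT, hRs.eq, Matrix.mul_assoc]
  -- P is positive definite
  have hPpd : P.PosDef := by
    refine Matrix.posDef_iff_dotProduct_mulVec.mpr ⟨?_, ?_⟩
    · show Pᴴ = P
      rw [Matrix.conjTranspose_eq_transpose_of_trivial]; exact hPT
    · intro x hx
      have hy : S⁻¹ *ᵥ x ≠ 0 := by
        intro h0
        apply hx
        have h1 : S *ᵥ (S⁻¹ *ᵥ x) = S *ᵥ (0 : Fin n → ℝ) := by rw [h0]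
        rwa [Matrix.mulVec_mulVec, hS1, Matrix.one_mulVec, Matrix.mulVec_zero] at h1
      have hPx : P *ᵥ x = S⁻¹ *ᵥ (R *ᵥ (S⁻¹ *ᵥ x)) := by
        rw [Matrix.mulVec_mulVec, Matrix.mulVec_mulVec]
      have hdot : star x ⬝ᵥ P *ᵥ x = star (S⁻¹ *ᵥ x) ⬝ᵥ R *ᵥ (S⁻¹ *ᵥ x) := by
        simp only [star_trivial]
        rw [hPx, Matrix.dotProduct_mulVec, ← Matrix.mulVec_transpose, hSiT]
      rw [hdot]
      exact hR.dotProduct_mulVec_pos hy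
  -- P * A * P = A + B
  have hAS : S⁻¹ * A * S⁻¹ = 1 := by
    rw [← hSsq, ← Matrix.mul_assoc, Matrix.mul_assoc (S⁻¹ * S), hS2, hS1, Matrix.one_mul]
  have hPAP : P * A * P = A + B := by
    have e1 : P * A * P = S⁻¹ * (R * (S⁻¹ * A * S⁻¹) * R) * S⁻¹ := by
      simp only [hPdef, Matrix.mul_assoc]
    rw [e1, hAS, Matrix.mul_one, hRsq]
    have e2 : S⁻¹ * (S * (A + B) * S) * S⁻¹ = S⁻¹ * S * (A + B) * (S * S⁻¹) := by
      simp only [Matrix.mul_assoc]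
    rw [e2, hS2, hS1, Matrix.one_mul, Matrix.mul_one]
  -- cancel S on both sides
  have cancelS : ∀ X Y : Matrix (Fin n) (Fin n) ℝ, S * X * S = S * Y * S → X = Y := by
    intro X Y hXY
    have e : ∀ Z : Matrix (Fin n) (Fin n) ℝ, S⁻¹ * (S * Z * S) * S⁻¹ = Z := by
      intro Z
      have : S⁻¹ * (S * Z * S) * S⁻¹ = (S⁻¹ * S) * Z * (S * S⁻¹) := by
        simp only [Matrix.mul_assoc]
      rw [this, hS2, hS1, Matrix.one_mul, Matrix.mul_one]
    rw [← e X, ← e Y, hXY]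
  -- B commutes with P
  have hM : S * B * S⁻¹ * R = S * (B * P) * S := by
    have : S * (B * P) * S = S * B * S⁻¹ * R * (S⁻¹ * S) := by
      simp only [hPdef, Matrix.mul_assoc]
    rw [this, hS2, Matrix.mul_one]
  have hPB : P * B = B * P := by
    have h' := h.eq
    rw [hM] at h'
    have hLT : (S * (B * P) * S)ᵀ = S * (P * B) * S := by
      simp only [Matrix.transpose_mul, hSs.eq, hPT, hBs.eq, Matrix.mul_assoc]
    rw [hLT] at h'
    exact cancelS _ _ h'
  -- conclude P * A = A * P
  have hcom : P * A = A * P := key_comm P A B hPpd hA hB hPB hPAP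
  -- A * B = B * A
  have hB_eq : B = P * A * P - A := by rw [hPAP]; abel
  have h4 : A * (P * A * P) = (P * A * P) * A := by
    have e1 : A * (P * A * P) = A * P * (A * P) := by simp only [Matrix.mul_assoc]
    have e2 : (P * A * P) * A = P * A * (P * A) := by simp only [Matrix.mul_assoc]
    rw [e1, e2, hcom]
  have hABBA : A * B = B * A := by
    rw [hB_eq, Matrix.mul_sub, Matrix.sub_mul, h4]
  refine ⟨?_, hABBA⟩
  show (B * (A + B))ᵀ = B * (A + B)
  rw [Matrix.transpose_mul, Matrix.transpose_add, hAs.eq, hBs.eq, Matrix.add_mul,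
    Matrix.mul_add, hABBA]
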